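/- For all real t with 0 < t < π/2, 3π·sin t + ((5π − 12)·(sin t)⁴ − π)·arctan(sin t) − 2π·t > 0. -/

import Mathlib

open Real

/-- If `f 0 = 0` and `f` has nonnegative derivative on `[0,∞)`, then `f ≥ 0` there. -/
lemma nonneg_of_deriv_nonneg {f f' : ℝ → ℝ}
    (hd : ∀ y : ℝ, HasDerivAt f (f' y) y)
    (h0 : f 0 = 0) (hge : ∀ y : ℝ, 0 ≤ y → 0 ≤ f' y) :
    ∀ y : ℝ, 0 ≤ y → 0 ≤ f y := by
  intro y hy
  have hmono : MonotoneOn f (Set.Ici (0:ℝ)) := by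
    apply monotoneOn_of_deriv_nonneg (convex_Ici 0)
    · exact (fun z _ => (hd z).continuousAt.continuousWithinAt)
    · intro z _
      exact ((hd z).differentiableAt).differentiableWithinAt
    · intro z hz
      rw [(hd z).deriv]
      exact hge z (le_of_lt (by simpa using hz))
  have := hmono (Set.self_mem_Ici) (Set.mem_Ici.2 hy) hy
  linarith [this, h0.ge, h0.le]

lemma sin_ge_cubic : ∀ y : ℝ, 0 ≤ y → y - y^3/6 ≤ Real.sin y := by
  have h := nonneg_of_deriv_nonneg (f := fun y => Real.sin y - (y - y^3/6))
    (f' := fun y => Real.cos y - (1 - y^2/2))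
    (fun y => by
      have h1 : HasDerivAt (fun y : ℝ => y - y^3/6) (1 - y^2/2) y := by
        have := (hasDerivAt_id y).sub ((hasDerivAt_pow 3 y).div_const 6)
        exact this.congr_deriv (by ring)
      exact (Real.hasDerivAt_sin y).sub h1)
    (by norm_num)
    (fun y _ => by have := Real.one_sub_sq_div_two_le_cos (x := y); linarith)
  intro y hy; linarith [h y hy]

lemma cos_le_quartic : ∀ y : ℝ, 0 ≤ y → Real.cos y ≤ 1 - y^2/2 + y^4/24 := by
  have h := nonneg_of_deriv_nonneg (f := fun y => (1 - y^2/2 + y^4/24) - Real.cos y)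
    (f' := fun y => (-y + y^3/6) + Real.sin y)
    (fun y => by
      have h1 : HasDerivAt (fun y : ℝ => 1 - y^2/2 + y^4/24) (-y + y^3/6) y := by
        have := (((hasDerivAt_pow 2 y).div_const 2).const_sub 1).add
          ((hasDerivAt_pow 4 y).div_const 24)
        exact this.congr_deriv (by ring)
      have := h1.sub (Real.hasDerivAt_cos y)
      exact this.congr_deriv (by ring))
    (by norm_num)
    (fun y hy => by
      have := sin_ge_cubic y hy
      linarith)
  intro y hy; linarith [h y hy]

lemma sin_le_quintic : ∀ y : ℝ, 0 ≤ y → Real.sin y ≤ y - y^3/6 + y^5/120 := by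
  have h := nonneg_of_deriv_nonneg (f := fun y => (y - y^3/6 + y^5/120) - Real.sin y)
    (f' := fun y => (1 - y^2/2 + y^4/24) - Real.cos y)
    (fun y => by
      have h1 : HasDerivAt (fun y : ℝ => y - y^3/6 + y^5/120) (1 - y^2/2 + y^4/24) y := by
        have := ((hasDerivAt_id y).sub ((hasDerivAt_pow 3 y).div_const 6)).add
          ((hasDerivAt_pow 5 y).div_const 120)
        exact this.congr_deriv (by ring)
      exact h1.sub (Real.hasDerivAt_sin y))
    (by norm_num)
    (fun y hy => by have := cos_le_quartic y hy; linarith)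
  intro y hy; linarith [h y hy]

lemma cos_ge_sextic : ∀ y : ℝ, 0 ≤ y → 1 - y^2/2 + y^4/24 - y^6/720 ≤ Real.cos y := by
  have h := nonneg_of_deriv_nonneg
    (f := fun y => Real.cos y - (1 - y^2/2 + y^4/24 - y^6/720))
    (f' := fun y => (y - y^3/6 + y^5/120) - Real.sin y)
    (fun y => by
      have h1 : HasDerivAt (fun y : ℝ => 1 - y^2/2 + y^4/24 - y^6/720)
          (-(y - y^3/6 + y^5/120)) y := by
        have := ((((hasDerivAt_pow 2 y).div_const 2).const_sub 1).add
          ((hasDerivAt_pow 4 y).div_const 24)).sub ((hasDerivAt_pow 6 y).div_const 720)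
        exact this.congr_deriv (by ring)
      have := (Real.hasDerivAt_cos y).sub h1
      exact this.congr_deriv (by ring))
    (by norm_num)
    (fun y hy => by have := sin_le_quintic y hy; linarith)
  intro y hy; linarith [h y hy]

lemma sin_ge_septic : ∀ y : ℝ, 0 ≤ y →
    y - y^3/6 + y^5/120 - y^7/5040 ≤ Real.sin y := by
  have h := nonneg_of_deriv_nonneg
    (f := fun y => Real.sin y - (y - y^3/6 + y^5/120 - y^7/5040))
    (f' := fun y => Real.cos y - (1 - y^2/2 + y^4/24 - y^6/720))
    (fun y => by
      have h1 : HasDerivAt (fun y : ℝ => y - y^3/6 + y^5/120 - y^7/5040)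
          (1 - y^2/2 + y^4/24 - y^6/720) y := by
        have := (((hasDerivAt_id y).sub ((hasDerivAt_pow 3 y).div_const 6)).add
          ((hasDerivAt_pow 5 y).div_const 120)).sub ((hasDerivAt_pow 7 y).div_const 5040)
        exact this.congr_deriv (by ring)
      exact (Real.hasDerivAt_sin y).sub h1)
    (by norm_num)
    (fun y hy => by have := cos_ge_sextic y hy; linarith)
  intro y hy; linarith [h y hy]

lemma arctan_ge_cubic : ∀ x : ℝ, 0 ≤ x → x - x^3/3 ≤ Real.arctan x := by
  have h := nonneg_of_deriv_nonneg (f := fun x => Real.arctan x - (x - x^3/3))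
    (f' := fun x => 1/(1+x^2) - (1 - x^2))
    (fun x => by
      have h1 : HasDerivAt (fun x : ℝ => x - x^3/3) (1 - x^2) x := by
        have := (hasDerivAt_id x).sub ((hasDerivAt_pow 3 x).div_const 3)
        exact this.congr_deriv (by ring)
      exact (Real.hasDerivAt_arctan x).sub h1)
    (by simp)
    (fun x _ => by
      have hx : (0:ℝ) < 1 + x^2 := by positivity
      rw [sub_nonneg, le_div_iff₀ hx]
      nlinarith [sq_nonneg (x^2)])
  intro x hx; linarith [h x hx]

lemma arctan_le_quintic : ∀ x : ℝ, 0 ≤ x → Real.arctan x ≤ x - x^3/3 + x^5/5 := by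
  have h := nonneg_of_deriv_nonneg (f := fun x => (x - x^3/3 + x^5/5) - Real.arctan x)
    (f' := fun x => (1 - x^2 + x^4) - 1/(1+x^2))
    (fun x => by
      have h1 : HasDerivAt (fun x : ℝ => x - x^3/3 + x^5/5) (1 - x^2 + x^4) x := by
        have := ((hasDerivAt_id x).sub ((hasDerivAt_pow 3 x).div_const 3)).add
          ((hasDerivAt_pow 5 x).div_const 5)
        exact this.congr_deriv (by ring)
      exact h1.sub (Real.hasDerivAt_arctan x))
    (by simp)
    (fun x _ => by
      have hx : (0:ℝ) < 1 + x^2 := by positivity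
      rw [sub_nonneg, div_le_iff₀ hx]
      nlinarith [sq_nonneg (x^3)])
  intro x hx; linarith [h x hx]

/-- A lower bound for `arctan` that is sharp at `x = 1`. -/
lemma arctan_ge_near_one : ∀ x : ℝ, 0 ≤ x → x ≤ 1 →
    π/4 - (1-x)/2 - (1-x)^2/4 - (1-x)^3/10 ≤ Real.arctan x := by
  intro x hx0 hx1
  set f : ℝ → ℝ := fun x => Real.arctan x - (π/4 - (1-x)/2 - (1-x)^2/4 - (1-x)^3/10) with hf
  have hderiv : ∀ y : ℝ, HasDerivAt f
      (1/(1+y^2) - (1/2 + (1-y)/2 + 3*(1-y)^2/10)) y := by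
    intro y
    have h1 : HasDerivAt (fun y : ℝ => π/4 - (1-y)/2 - (1-y)^2/4 - (1-y)^3/10)
        (1/2 + (1-y)/2 + 3*(1-y)^2/10) y := by
      have := (((hasDerivAt_id y).const_sub 1).div_const 2).const_sub (π/4) |>.sub
        ((((hasDerivAt_id y).const_sub 1).pow 2).div_const 4) |>.sub
        ((((hasDerivAt_id y).const_sub 1).pow 3).div_const 10)
      exact this.congr_deriv (by simp only [id_eq]; ring)
    exact (Real.hasDerivAt_arctan y).sub h1
  have hanti : AntitoneOn f (Set.Icc (0:ℝ) 1) := by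
    apply antitoneOn_of_deriv_nonpos (convex_Icc 0 1)
    · exact fun z _ => ((hderiv z).continuousAt).continuousWithinAt
    · intro z _
      exact ((hderiv z).differentiableAt).differentiableWithinAt
    · intro z hz
      rw [(hderiv z).deriv]
      rw [interior_Icc] at hz
      obtain ⟨hz0, hz1⟩ := hz
      have hden : (0:ℝ) < 1 + z^2 := by positivity
      rw [sub_nonpos, div_le_iff₀ hden]
      nlinarith [sq_nonneg (1-z), sq_nonneg z, mul_pos hz0 (sub_pos.2 hz1)]
  have h1 : f 1 = 0 := by
    simp [hf, Real.arctan_one]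
  have := hanti (Set.mem_Icc.2 ⟨hx0, hx1⟩) (Set.mem_Icc.2 ⟨zero_le_one, le_refl 1⟩) hx1
  rw [h1] at this
  simpa [hf, sub_nonneg] using this

/-- Polynomial certificate: for `0 ≤ x ≤ 0.97`,
`x ≤ q - q^3/6 + q^5/120 - q^7/5040` where `q = x + x^3/6 + 13/50*x^5`. -/
lemma poly_cert (x : ℝ) (hx0 : 0 ≤ x) (hx97 : x ≤ 0.97) :
    x ≤ (x + x^3/6 + 13/50*x^5) - (x + x^3/6 + 13/50*x^5)^3/6
      + (x + x^3/6 + 13/50*x^5)^5/120 - (x + x^3/6 + 13/50*x^5)^7/5040 := by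
  have hx2 : x^2 ≤ 0.9409 := by nlinarith
  have hx4 : x^4 ≤ 0.8853 := by nlinarith [sq_nonneg x, sq_nonneg (x^2)]
  have hx6 : x^6 ≤ 0.833 := by nlinarith [pow_nonneg hx0 3, sq_nonneg (x^3)]
  have h5 : (0:ℝ) ≤ x^5 := pow_nonneg hx0 5
  have h7 : x^7 ≤ 0.9409 * x^5 := by nlinarith [mul_le_mul_of_nonneg_right hx2 h5]
  have h9 : x^9 ≤ 0.8853 * x^5 := by nlinarith [mul_le_mul_of_nonneg_right hx4 h5]
  have h11 : x^11 ≤ 0.833 * x^5 := by nlinarith [mul_le_mul_of_nonneg_right hx6 h5]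
  have hx1 : x ≤ 1 := by linarith
  have hple : ∀ n : ℕ, x^(n+5) ≤ x^5 := by
    intro n
    calc x^(n+5) = x^n * x^5 := by ring
    _ ≤ 1 * x^5 := by
        apply mul_le_mul_of_nonneg_right _ h5
        exact pow_le_one₀ hx0 hx1
    _ = x^5 := by ring
  have h13 : (0:ℝ) ≤ x^13 := pow_nonneg hx0 13
  have h15 : x^15 ≤ x^5 := hple 10
  have h17 : (0:ℝ) ≤ x^17 := pow_nonneg hx0 17
  have h19 : (0:ℝ) ≤ x^19 := pow_nonneg hx0 19
  have h21 : (0:ℝ) ≤ x^21 := pow_nonneg hx0 21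
  have h23 : x^23 ≤ x^5 := hple 18
  have h25 : x^25 ≤ x^5 := hple 20
  have h27 : x^27 ≤ x^5 := hple 22
  have h29 : x^29 ≤ x^5 := hple 24
  have h31 : x^31 ≤ x^5 := hple 26
  have h33 : x^33 ≤ x^5 := hple 28
  have h35 : x^35 ≤ x^5 := hple 30
  have hexp : (x + x^3/6 + 13/50*x^5) - (x + x^3/6 + 13/50*x^5)^3/6
      + (x + x^3/6 + 13/50*x^5)^5/120 - (x + x^3/6 + 13/50*x^5)^7/5040 - x
      = 37/200*x^5 - 24/175*x^7 - 2021/64800*x^9 - 98107/3240000*x^11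
        + 13/9000*x^13 - 508063/1458000000*x^15 + 9761461/5832000000*x^17
        + 32521237/104976000000*x^19 + 15034884727/110224800000000*x^21
        - 4500743/209952000000*x^23 - 602342533/72900000000000*x^25
        - 560549171/72900000000000*x^27 - 43669769/24300000000000*x^29
        - 38243179/67500000000000*x^31 - 4826809/67500000000000*x^33
        - 62748517/3937500000000000*x^35 := by ring
  nlinarith [hexp, h5, h7, h9, h11, h13, h15, h17, h19, h21, h23, h25, h27,
    h29, h31, h33, h35]

set_option maxHeartbeats 1000000 in
/-- For `0 < x ≤ 0.97` with `x = sin t`, we have `t ≤ x + x^3/6 + 13/50 x^5`. -/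
lemma t_le_q (t x : ℝ) (h1 : 0 < t) (h2 : t < π/2) (hxdef : x = Real.sin t)
    (hx0 : 0 < x) (hx97 : x ≤ 0.97) : t ≤ x + x^3/6 + 13/50*x^5 := by
  have hx3u : x^3 ≤ (0.97:ℝ)^3 := pow_le_pow_left₀ hx0.le hx97 3
  have hx5u : x^5 ≤ (0.97:ℝ)^5 := pow_le_pow_left₀ hx0.le hx97 5
  have hpi_lb : (3.141592:ℝ) < π := Real.pi_gt_d6
  have hq0 : (0:ℝ) ≤ x + x^3/6 + 13/50*x^5 := by positivity
  have hqle : x + x^3/6 + 13/50*x^5 ≤ π/2 := by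
    norm_num at hx3u hx5u ⊢
    nlinarith
  have hsinq : x ≤ Real.sin (x + x^3/6 + 13/50*x^5) := by
    have hs := sin_ge_septic _ hq0
    have hcert := poly_cert x hx0.le hx97
    linarith
  by_contra hqt
  push_neg at hqt
  have hm := Real.strictMonoOn_sin (a := x + x^3/6 + 13/50*x^5) (b := t)
    ⟨by linarith [Real.pi_pos], hqle⟩ ⟨by linarith [Real.pi_pos], h2.le⟩ hqt
  rw [← hxdef] at hm
  linarith

set_option maxHeartbeats 1000000 in
lemma regionA_core (p x A t : ℝ) (hp1 : 3.141592 < p) (hx0 : 0 < x) (hx97 : x ≤ 0.97)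
    (hAlb : x - x^3/3 ≤ A) (hAub : A ≤ x - x^3/3 + x^5/5)
    (htq : t ≤ x + x^3/6 + 13/50*x^5) :
    0 < 3*p*x + ((5*p - 12)*x^4 - p)*A - 2*p*t := by
  have hp0 : (0:ℝ) < p := by linarith
  have e1 : (5*p - 12) * x^4 * (x - x^3/3) ≤ (5*p - 12) * x^4 * A := by
    apply mul_le_mul_of_nonneg_left hAlb
    have : (0:ℝ) < 5*p - 12 := by linarith
    positivity
  have e2 : p * A ≤ p * (x - x^3/3 + x^5/5) := mul_le_mul_of_nonneg_left hAub hp0.le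
  have e3 : 2*p*t ≤ 2*p*(x + x^3/6 + 13/50*x^5) :=
    mul_le_mul_of_nonneg_left htq (by positivity)
  have hx2u : x^2 ≤ 0.9409 := by nlinarith
  have h7 : x^7 ≤ 0.9409 * x^5 := by
    nlinarith [mul_le_mul_of_nonneg_right hx2u (pow_nonneg hx0.le 5)]
  have hky1 : (5*p - 12) * x^7 ≤ (5*p - 12) * (0.9409 * x^5) :=
    mul_le_mul_of_nonneg_left h7 (by linarith)
  have hpx5 : 3.141592 * x^5 ≤ p * x^5 :=
    mul_le_mul_of_nonneg_right hp1.le (pow_nonneg hx0.le 5)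
  have hx5p : (0:ℝ) < x^5 := pow_pos hx0 5
  have key : (5*p - 12) * (x^5 - x^7/3) - (7*p/10) * x^5 > 0 := by
    nlinarith [hky1, hpx5, hx5p]
  linarith [e1, e2, e3, key]

set_option maxHeartbeats 1000000 in
lemma regionB_core (p x c : ℝ) (hp1 : 3.141592 < p) (hp2 : p < 3.141593)
    (hc0 : 0 < c) (hpyth : x^2 + c^2 = 1) (hx97 : 0.97 < x) (hx1 : x < 1) :
    0 < ((5*p - 12) * x^4 - p) * (p/4 - (1-x)/2 - (1-x)^2/4 - (1-x)^3/10)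
      + 3*p*x + 2*p*c - p^2 := by
  have hx0 : (0:ℝ) < x := by linarith
  obtain ⟨W1, hW1def⟩ : ∃ W1 : ℝ, W1 = (5/4*p^2 - 17/20*p) + (5/4*p^2 - 51/20*p)*x
    + (5/4*p^2 - 31/10*p)*x^2 + (5/4*p^2 - 3*p)*x^3 + (17/4*p - 51/5)*x^4
    + (27/5 - 9/4*p)*x^5 + (1/2*p - 6/5)*x^6 := ⟨_, rfl⟩
  have hid : ((5*p - 12) * x^4 - p) * (p/4 - (1-x)/2 - (1-x)^2/4 - (1-x)^3/10)
      + 3*p*x + 2*p*c - p^2 = 2*p*c - (1-x)*W1 := by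
    rw [hW1def]; ring
  have hxle1 : x ≤ 1 := hx1.le
  have hx2le : x^2 ≤ 1 := pow_le_one₀ hx0.le hxle1
  have hx3le : x^3 ≤ 1 := pow_le_one₀ hx0.le hxle1
  have hx4le : x^4 ≤ 1 := pow_le_one₀ hx0.le hxle1
  have hx6le : x^6 ≤ 1 := pow_le_one₀ hx0.le hxle1
  have hx5lb : (0.8587:ℝ) ≤ x^5 := by
    have := pow_le_pow_left₀ (by norm_num : (0:ℝ) ≤ 0.97) hx97.le 5
    norm_num at this
    linarith
  have hpisq_ub : p^2 ≤ 9.8696087 := by nlinarith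
  have hW1ub : W1 ≤ 22 := by
    rw [hW1def]
    have t1 : (5/4*p^2 - 51/20*p)*x ≤ (5/4*p^2 - 51/20*p)*1 :=
      mul_le_mul_of_nonneg_left hxle1 (by nlinarith)
    have t2 : (5/4*p^2 - 31/10*p)*x^2 ≤ (5/4*p^2 - 31/10*p)*1 :=
      mul_le_mul_of_nonneg_left hx2le (by nlinarith)
    have t3 : (5/4*p^2 - 3*p)*x^3 ≤ (5/4*p^2 - 3*p)*1 :=
      mul_le_mul_of_nonneg_left hx3le (by nlinarith)
    have t4 : (17/4*p - 51/5)*x^4 ≤ (17/4*p - 51/5)*1 :=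
      mul_le_mul_of_nonneg_left hx4le (by nlinarith)
    have t5 : (27/5 - 9/4*p)*x^5 ≤ (27/5 - 9/4*p)*0.8587 := by
      apply mul_le_mul_of_nonpos_left hx5lb
      nlinarith
    have t6 : (1/2*p - 6/5)*x^6 ≤ (1/2*p - 6/5)*1 :=
      mul_le_mul_of_nonneg_left hx6le (by nlinarith)
    nlinarith [t1, t2, t3, t4, t5, t6]
  have h1x : (0:ℝ) ≤ 1 - x := by linarith
  have hx2lb : (0.9409:ℝ) ≤ x^2 := by nlinarith
  have hcub : c ≤ 0.244 := by nlinarith [sq_nonneg (c - 0.244)]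
  have hw : (1-x)*W1 ≤ (1-x)*22 := mul_le_mul_of_nonneg_left hW1ub h1x
  have hq : 1.97*(1-x) ≤ c^2 := by
    nlinarith [mul_nonneg h1x (show (0:ℝ) ≤ x - 0.97 by linarith)]
  have hc2c : c^2 ≤ 0.244*c := by nlinarith [mul_le_mul_of_nonneg_right hcub hc0.le]
  have hpic : 3.141592*c < p*c := (mul_lt_mul_iff_left₀ hc0).mpr hp1
  have hfin : 0 < 2*p*c - (1-x)*W1 := by linarith [hw, hq, hc2c, hpic]
  linarith [hid.ge, hid.le, hfin]

set_option maxHeartbeats 1000000 in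
theorem stmt5 (t : ℝ) (h1 : 0 < t) (h2 : t < π/2) :
    3*π*sin t + ((5*π - 12)*(sin t)^4 - π)*arctan (sin t) - 2*π*t > 0 := by
  have hpi_lb : (3.141592:ℝ) < π := Real.pi_gt_d6
  have hpi_ub : π < 3.141593 := Real.pi_lt_d6
  have hx0' : 0 < Real.sin t := Real.sin_pos_of_pos_of_lt_pi h1 (by linarith)
  have hc0' : 0 < Real.cos t := Real.cos_pos_of_mem_Ioo ⟨by linarith, h2⟩
  have hpyth' : Real.sin t ^ 2 + Real.cos t ^ 2 = 1 := Real.sin_sq_add_cos_sq t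
  obtain ⟨x, hxdef⟩ : ∃ x, x = Real.sin t := ⟨_, rfl⟩
  obtain ⟨c, hcdef⟩ : ∃ c, c = Real.cos t := ⟨_, rfl⟩
  obtain ⟨A, hAdef⟩ : ∃ A, A = Real.arctan (Real.sin t) := ⟨_, rfl⟩
  rw [← hxdef] at hAdef
  rw [← hxdef, ← hcdef] at hpyth'
  rw [← hxdef] at hx0'
  rw [← hcdef] at hc0'
  rw [← hxdef, ← hAdef]
  have hx0 : 0 < x := hx0'
  have hc0 : 0 < c := hc0'
  have hpyth : x^2 + c^2 = 1 := hpyth'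
  have hx1 : x < 1 := by nlinarith
  rcases le_or_gt x 0.97 with hcase | hcase
  · -- Region A : x ≤ 0.97
    have hAlb : x - x^3/3 ≤ A := by rw [hAdef]; exact arctan_ge_cubic x hx0.le
    have hAub : A ≤ x - x^3/3 + x^5/5 := by rw [hAdef]; exact arctan_le_quintic x hx0.le
    have htq : t ≤ x + x^3/6 + 13/50*x^5 := t_le_q t x h1 h2 hxdef hx0 hcase
    linarith [regionA_core π x A t hpi_lb hx0 hcase hAlb hAub htq]
  · -- Region B : x ≥ 0.97
    have hB : π/4 - (1-x)/2 - (1-x)^2/4 - (1-x)^3/10 ≤ A := by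
      rw [hAdef]; exact arctan_ge_near_one x hx0.le hx1.le
    have hcos : c ≤ π/2 - t := by
      have hs := Real.sin_le (x := π/2 - t) (by linarith)
      rw [Real.sin_pi_div_two_sub, ← hcdef] at hs
      exact hs
    have ht : 2*π*t ≤ π^2 - 2*π*c := by
      have hmul := mul_le_mul_of_nonneg_left hcos Real.pi_pos.le
      nlinarith [hmul]
    have hx4 : (0.88529281:ℝ) ≤ x^4 := by
      have := pow_le_pow_left₀ (by norm_num : (0:ℝ) ≤ 0.97) hcase.le 4
      norm_num at this
      linarith
    have hC : 0 ≤ (5*π - 12) * x^4 - π := by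
      have h5 : (0:ℝ) ≤ 5*π - 12 := by linarith
      have hmul := mul_le_mul_of_nonneg_left hx4 h5
      nlinarith [hmul]
    have e1 : ((5*π - 12) * x^4 - π) * (π/4 - (1-x)/2 - (1-x)^2/4 - (1-x)^3/10)
        ≤ ((5*π - 12) * x^4 - π) * A :=
      mul_le_mul_of_nonneg_left hB hC
    linarith [e1, ht, regionB_core π x c hpi_lb hpi_ub hc0 hpyth hcase hx1]
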